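/- Let x : ℕ → ℕ be superadditive with x(n) ≥ 1 for all n ≥ 1, let y : ℕ → ℕ satisfy y(n) ≥ 1 for all n ≥ 1, and let (B_n)_{n≥0} be the factorial set associated with (x, y). Then for all n ≥ 0 and m ≥ 0, B_n divides B_{n+m}. -/

import Mathlib

theorem stmt_3 (x y : ℕ → ℕ)
    (hsuper : ∀ m n, 1 ≤ m → 1 ≤ n → x m + x n ≤ x (m + n))
    (hx : ∀ n, 1 ≤ n → 1 ≤ x n) (hy : ∀ n, 1 ≤ n → 1 ≤ y n)
    (B : ℕ → ℕ) (hB : ∀ n, B n = ∏ k ∈ Finset.Icc 1 n, y k ^ x (n / k)) :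
    ∀ n m : ℕ, B n ∣ B (n + m) := by
  have hmono : ∀ a b, 1 ≤ a → a ≤ b → x a ≤ x b := by
    intro a b ha hab
    rcases Nat.lt_or_ge a b with h | h
    · have h1 := hsuper a (b - a) ha (by omega)
      have h2 := hx (b - a) (by omega)
      have : a + (b - a) = b := by omega
      rw [this] at h1
      omega
    · exact le_of_eq (by rw [le_antisymm hab h])
  intro n m
  rw [hB, hB]
  calc (∏ k ∈ Finset.Icc 1 n, y k ^ x (n / k))
      ∣ ∏ k ∈ Finset.Icc 1 n, y k ^ x ((n + m) / k) := by
        apply Finset.prod_dvd_prod_of_dvd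
        intro k hk
        simp only [Finset.mem_Icc] at hk
        exact pow_dvd_pow _ (hmono _ _ ((Nat.one_le_div_iff (by omega)).2 hk.2)
          (Nat.div_le_div_right (by omega)))
    _ ∣ ∏ k ∈ Finset.Icc 1 (n + m), y k ^ x ((n + m) / k) :=
        Finset.prod_dvd_prod_of_subset _ _ _ (Finset.Icc_subset_Icc_right (by omega))
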